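/- Let Γₙ = {A¹, …, Aᵏ} be a set of n-orders with a certificate. If C is a minimal certificate of Γₙ, then n ≤ |C| ≤ k·n; moreover |C| = n if and only if k = 1. -/

import Mathlib

/-- A finite labeled order: a partial order structure on `Fin n`. -/
abbrev FinOrd (n : ℕ) := PartialOrder (Fin n)

/-- Isomorphism of two orders on `Fin n`. -/
def OrdIso {n : ℕ} (p q : FinOrd n) : Prop :=
  Nonempty (p.le ≃r q.le)

instance ordSetoid (n : ℕ) : Setoid (FinOrd n) where
  r := OrdIso
  iseqv := by
    refine ⟨fun p => ⟨RelIso.refl _⟩, ?_, ?_⟩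
    · rintro p q ⟨e⟩; exact ⟨e.symm⟩
    · rintro p q r ⟨e⟩ ⟨f⟩; exact ⟨e.trans f⟩

/-- An `n`-order: an isomorphism class of partial orders of cardinality `n`. -/
def NOrder (n : ℕ) := Quotient (ordSetoid n)

/-- `B` (a partial order on `Fin n`) occurs as a stem (finite downward-closed
subcauset) in the partial order `p` on `α`. -/
def StemIn {n : ℕ} {α : Type*} (B : FinOrd n) (p : PartialOrder α) : Prop :=
  ∃ f : Fin n → α, Function.Injective f ∧
    (∀ i j : Fin n, B.le i j ↔ p.le (f i) (f j)) ∧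
    (∀ (i : Fin n) (y : α), p.lt y (f i) → ∃ j : Fin n, f j = y)

/-- The `n`-order `B` is a stem in the order `p`. -/
def QStemIn {n : ℕ} {α : Type*} (B : NOrder n) (p : PartialOrder α) : Prop :=
  ∃ b : FinOrd n, ⟦b⟧ = B ∧ StemIn b p

/-- The set of `k`-stems of `p`, as a set of `k`-orders. -/
def stems (k : ℕ) {α : Type*} (p : PartialOrder α) : Set (NOrder k) :=
  {B | QStemIn B p}

/-- Stem relation between unlabeled finite orders: `S` is a stem in `T`. -/
def NStemIn {n m : ℕ} (S : NOrder n) (T : NOrder m) : Prop :=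
  ∃ t : FinOrd m, ⟦t⟧ = T ∧ QStemIn S t

/-- An order is past-finite if every element has finitely many elements below it. -/
def PastFinite {α : Type*} (p : PartialOrder α) : Prop :=
  ∀ x : α, {y : α | p.lt y x}.Finite

/-- The operation sending a set of `n`-orders to the set of `(n-1)`-stems of its
elements. -/
def Ominus (n : ℕ) (Γ : Set (NOrder n)) : Set (NOrder (n - 1)) :=
  {B | ∃ A ∈ Γ, NStemIn B A}

/-- The `j`-fold iterate of `Ominus`. -/
def OminusIter : (j : ℕ) → (n : ℕ) → Set (NOrder n) → Set (NOrder (n - j))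
  | 0, _, Γ => Γ
  | j + 1, n, Γ => Ominus (n - j) (OminusIter j n Γ)

/-- `Γ` is a node of covtree at level `n`: it is nonempty and has a certificate,
i.e. a (finite or countably infinite) past-finite order whose set of `n`-stems
is exactly `Γ`. -/
def IsNode (n : ℕ) (Γ : Set (NOrder n)) : Prop :=
  Γ.Nonempty ∧ ∃ (α : Type) (p : PartialOrder α), Countable α ∧ PastFinite p ∧
    stems n p = Γ

/-- Let `Γ = {A¹, …, Aᵏ}` be a nonempty finite set of
`n`-orders and let `C` (a finite order of cardinality `m`) be a minimal
certificate of `Γ` — i.e. a finite certificate such that any finite certificate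
of `Γ` which is a stem in `C` has the same cardinality (hence is isomorphic to
`C`). Then `n ≤ m ≤ k·n`, and `m = n` if and only if `k = 1`. -/
theorem minimal_certificate_cardinality {n k : ℕ} (Γ : Set (NOrder n))
    (hΓfin : Γ.Finite) (hk : Γ.ncard = k) (hne : Γ.Nonempty)
    {m : ℕ} (C : FinOrd m)
    (hcert : stems n C = Γ)
    (hmin : ∀ (m' : ℕ) (q : FinOrd m'), stems n q = Γ → StemIn q C → m' = m) :
    n ≤ m ∧ m ≤ k * n ∧ (m = n ↔ k = 1) := by
  classical
  -- n ≤ m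
  obtain ⟨A0, hA0⟩ := hne
  have hA0' : QStemIn A0 C := by rw [← hcert] at hA0; exact hA0
  obtain ⟨b0, -, f0, hf0inj, -, -⟩ := hA0'
  have hnm : n ≤ m := by
    simpa using Fintype.card_le_of_injective f0 hf0inj
  -- choose stem embeddings for each element of Γ
  have hfun : Nonempty (Fin n → Fin m) := by
    rcases Nat.eq_zero_or_pos n with h | h
    · subst h; exact ⟨fun i => i.elim0⟩
    · exact ⟨fun _ => ⟨0, lt_of_lt_of_le h hnm⟩⟩
  have hch : ∀ A : NOrder n, ∃ (b : FinOrd n) (f : Fin n → Fin m), A ∈ Γ →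
      (⟦b⟧ = A ∧ Function.Injective f ∧
      (∀ i j, b.le i j ↔ C.le (f i) (f j)) ∧
      (∀ i y, C.lt y (f i) → ∃ j, f j = y)) := by
    intro A
    by_cases hA : A ∈ Γ
    · have hA' : QStemIn A C := by rw [← hcert] at hA; exact hA
      obtain ⟨b, hb, fA, h1, h2, h3⟩ := hA'
      exact ⟨b, fA, fun _ => ⟨hb, h1, h2, h3⟩⟩
    · exact ⟨inferInstance, hfun.some, fun h => absurd h hA⟩
  choose b f hprop using hch
  have hbf : ∀ A ∈ Γ, ⟦b A⟧ = A := fun A hA => (hprop A hA).1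
  have hfinj : ∀ A ∈ Γ, Function.Injective (f A) := fun A hA => (hprop A hA).2.1
  have hfle : ∀ A ∈ Γ, ∀ i j, (b A).le i j ↔ C.le (f A i) (f A j) :=
    fun A hA => (hprop A hA).2.2.1
  have hfdc : ∀ A ∈ Γ, ∀ i y, C.lt y (f A i) → ∃ j, f A j = y :=
    fun A hA => (hprop A hA).2.2.2
  set S : Finset (Fin m) :=
    hΓfin.toFinset.biUnion (fun A => Finset.image (f A) (Finset.univ : Finset (Fin n))) with hSdef
  have hmemS : ∀ x, x ∈ S ↔ ∃ A ∈ Γ, ∃ i, f A i = x := by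
    intro x
    simp [hSdef]
  -- S is downward closed
  have hSdc : ∀ x ∈ S, ∀ y, C.lt y x → y ∈ S := by
    intro x hx y hyx
    obtain ⟨A, hA, i, hi⟩ := (hmemS x).1 hx
    obtain ⟨j, hj⟩ := hfdc A hA i y (hi ▸ hyx)
    exact (hmemS y).2 ⟨A, hA, j, hj⟩
  set e : Fin S.card ≃ {x // x ∈ S} := S.equivFin.symm with hedef
  set g : Fin S.card → Fin m := fun i => (e i : Fin m) with hgdef
  have hginj : Function.Injective g := fun a b h =>
    e.injective (Subtype.ext h)
  have hgS : ∀ i, g i ∈ S := fun i => (e i).2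
  have hgsurj : ∀ x ∈ S, ∃ i, g i = x := by
    intro x hx
    exact ⟨e.symm ⟨x, hx⟩, by simp [hgdef]⟩
  set q : FinOrd S.card := @PartialOrder.lift (Fin S.card) (Fin m) C g hginj with hqdef
  have hqle : ∀ a b, q.le a b ↔ C.le (g a) (g b) := fun a b => Iff.rfl
  have hqlt : ∀ a b, q.lt a b ↔ C.lt (g a) (g b) := fun a b => Iff.rfl
  -- q is a stem in C
  have hqstem : StemIn q C := by
    refine ⟨g, hginj, fun i j => Iff.rfl, ?_⟩
    intro i y hy
    exact hgsurj y (hSdc (g i) (hgS i) y hy)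
  -- q is a certificate of Γ
  have hqcert : stems n q = Γ := by
    apply Set.Subset.antisymm
    · -- every n-stem of q is an n-stem of C
      rintro B ⟨b', hb', f', hf'inj, hf'le, hf'dc⟩
      rw [← hcert]
      refine ⟨b', hb', g ∘ f', hginj.comp hf'inj, fun i j => hf'le i j, ?_⟩
      intro i y hy
      obtain ⟨j', hj'⟩ := hgsurj y (hSdc (g (f' i)) (hgS (f' i)) y hy)
      have : q.lt j' (f' i) := by rw [hqlt, hj']; exact hy
      obtain ⟨j, hj⟩ := hf'dc i j' this
      exact ⟨j, by simp [Function.comp, hj, hj']⟩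
    · -- every element of Γ is an n-stem of q
      intro A hA
      have hmem : ∀ i, f A i ∈ S := fun i => (hmemS _).2 ⟨A, hA, i, rfl⟩
      set gA : Fin n → Fin S.card := fun i => e.symm ⟨f A i, hmem i⟩ with hgA
      have hggA : ∀ i, g (gA i) = f A i := by
        intro i; simp [hgdef, hgA]
      refine ⟨b A, hbf A hA, gA, ?_, ?_, ?_⟩
      · intro a c h
        have h1 := congrArg g h
        rw [hggA, hggA] at h1
        exact hfinj A hA h1
      · intro i j
        rw [hfle A hA i j, hqle, hggA, hggA]
      · intro i y hy
        rw [hqlt, hggA] at hy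
        obtain ⟨j, hj⟩ := hfdc A hA i (g y) hy
        refine ⟨j, ?_⟩
        apply hginj
        rw [hggA, hj]
  have hm' : S.card = m := hmin S.card q hqcert hqstem
  -- cardinality bound
  have hcard : S.card ≤ k * n := by
    calc S.card ≤ ∑ A ∈ hΓfin.toFinset, (Finset.image (f A) Finset.univ).card :=
          Finset.card_biUnion_le
      _ ≤ ∑ A ∈ hΓfin.toFinset, n := by
          refine Finset.sum_le_sum fun A _ => ?_
          simpa using Finset.card_image_le (s := (Finset.univ : Finset (Fin n))) (f := f A)
      _ = hΓfin.toFinset.card * n := by rw [Finset.sum_const, smul_eq_mul]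
      _ = k * n := by rw [← Set.ncard_eq_toFinset_card Γ hΓfin, hk]
  have hmkn : m ≤ k * n := hm' ▸ hcard
  refine ⟨hnm, hmkn, ?_, ?_⟩
  · -- m = n → k = 1
    intro hmn
    subst hmn
    have hΓ : Γ = {⟦C⟧} := by
      apply Set.eq_singleton_iff_unique_mem.2
      constructor
      · rw [← hcert]
        exact ⟨C, rfl, id, Function.injective_id, fun i j => Iff.rfl,
          fun i y _ => ⟨y, rfl⟩⟩
      · intro B hB
        rw [← hcert] at hB
        obtain ⟨b', hb', f', hf'inj, hf'le, -⟩ := hB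
        have hbij : Function.Bijective f' := (Finite.injective_iff_bijective).1 hf'inj
        rw [← hb']
        exact Quotient.sound ⟨⟨Equiv.ofBijective f' hbij, fun {a c} => (hf'le a c).symm⟩⟩
    rw [← hk, hΓ]; exact Set.ncard_singleton _
  · -- k = 1 → m = n
    intro hk1
    subst hk1
    rw [one_mul] at hmkn
    omega
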